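/- Let a, b ≥ 0 be reals with a + b ≤ 1, and define F : [0,1] → ℝ by F(z) = (1 − z) e^{−1} + a·( (1 − e^{z−1})(1 − e^{−1}) + (e^{z−1} − e^{−1}) ) + b·(1 − e^{−z}). Then for every z ∈ [0,1]: F(z) ≥ min{ F(0), F(1) }. -/

import Mathlib

open Real

/-- Lemma `mid` of the Ranking analysis: the dual-feasibility expression as a
function of `z` is minimized at `z = 0` or `z = 1`. -/
theorem ranking_mid_lemma
    (a b : ℝ) (ha : 0 ≤ a) (hb : 0 ≤ b) (hab : a + b ≤ 1)
    (F : ℝ → ℝ)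
    (hF : ∀ z : ℝ, F z =
      (1 - z) * Real.exp (-1)
        + a * ((1 - Real.exp (z - 1)) * (1 - Real.exp (-1))
                 + (Real.exp (z - 1) - Real.exp (-1)))
        + b * (1 - Real.exp (-z))) :
    ∀ z ∈ Set.Icc (0 : ℝ) 1, F z ≥ min (F 0) (F 1) := by
  intro z hz
  obtain ⟨hz0, hz1⟩ := hz
  set E : ℝ := Real.exp (-1) with hE
  set g : ℝ → ℝ := fun t => -E + a * E * Real.exp (t - 1) + b * Real.exp (-t) with hg
  -- F has derivative g
  have hexp1 : ∀ t : ℝ, HasDerivAt (fun t : ℝ => Real.exp (t - 1)) (Real.exp (t - 1)) t := by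
    intro t
    simpa using (((hasDerivAt_id t).sub_const 1).exp)
  have hexp2 : ∀ t : ℝ, HasDerivAt (fun t : ℝ => Real.exp (-t)) (-Real.exp (-t)) t := by
    intro t
    simpa using ((hasDerivAt_id t).neg.exp)
  have hFeq : F = fun t => (1 - t) * E
        + a * ((1 - Real.exp (t - 1)) * (1 - E) + (Real.exp (t - 1) - E))
        + b * (1 - Real.exp (-t)) := funext hF
  have hd : ∀ t : ℝ, HasDerivAt F (g t) t := by
    intro t
    rw [hFeq]
    have h1 : HasDerivAt (fun t : ℝ => (1 - t) * E) (-1 * E) t :=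
      ((hasDerivAt_id t).const_sub 1).mul_const E
    have h2 : HasDerivAt (fun t : ℝ => (1 - Real.exp (t - 1)) * (1 - E) + (Real.exp (t - 1) - E))
        ((-Real.exp (t - 1)) * (1 - E) + Real.exp (t - 1)) t :=
      (((hexp1 t).const_sub 1).mul_const (1 - E)).add ((hexp1 t).sub_const E)
    have h3 := (h1.add (h2.const_mul a)).add (((hexp2 t).const_sub 1).const_mul b)
    refine h3.congr_deriv ?_
    simp [hg]
    ring
  -- g has derivative g'
  have hd2 : ∀ t : ℝ, HasDerivAt g (a * E * Real.exp (t - 1) - b * Real.exp (-t)) t := by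
    intro t
    have h3 := ((((hexp1 t).const_mul (a * E)).const_add (-E)).add ((hexp2 t).const_mul b))
    refine h3.congr_deriv ?_
    ring
  -- g' has derivative g''
  have hd3 : ∀ t : ℝ, HasDerivAt (fun t => a * E * Real.exp (t - 1) - b * Real.exp (-t))
      (a * E * Real.exp (t - 1) + b * Real.exp (-t)) t := by
    intro t
    have h3 := (((hexp1 t).const_mul (a * E)).sub ((hexp2 t).const_mul b))
    refine h3.congr_deriv ?_
    ring
  have hEpos : 0 < E := Real.exp_pos _
  -- g is convex
  have hderivg : deriv g = fun t => a * E * Real.exp (t - 1) - b * Real.exp (-t) :=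
    funext fun t => (hd2 t).deriv
  have hgconv : ConvexOn ℝ Set.univ g := by
    apply convexOn_univ_of_deriv2_nonneg
    · exact fun t => (hd2 t).differentiableAt
    · rw [hderivg]; exact fun t => (hd3 t).differentiableAt
    · intro x
      have : deriv (deriv g) x = a * E * Real.exp (x - 1) + b * Real.exp (-x) := by
        rw [hderivg]; exact (hd3 x).deriv
      simp only [Function.iterate_succ, Function.iterate_zero, Function.comp_apply, id_eq]
      rw [this]
      positivity
  have hg1 : g 1 ≤ 0 := by
    have : g 1 = E * (a + b - 1) := by
      simp [hg, hE, Real.exp_zero]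
      ring
    rw [this]
    nlinarith
  have hFcont : Continuous F := by
    rw [hFeq]; continuity
  have hFdiff : Differentiable ℝ F := fun t => (hd t).differentiableAt
  have hderivF : deriv F = g := funext fun t => (hd t).deriv
  by_cases hgz : g z ≤ 0
  · -- g ≤ 0 on [z,1], so F antitone there, F z ≥ F 1
    have hanti : AntitoneOn F (Set.Icc z 1) := by
      apply antitoneOn_of_deriv_nonpos (convex_Icc z 1) hFcont.continuousOn
        hFdiff.differentiableOn
      intro x hx
      rw [interior_Icc] at hx
      rw [hderivF]
      have hxseg : x ∈ segment ℝ z (1 : ℝ) := by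
        rw [segment_eq_Icc hz1]
        exact ⟨hx.1.le, hx.2.le⟩
      have := hgconv.le_on_segment (Set.mem_univ z) (Set.mem_univ 1) hxseg
      calc g x ≤ max (g z) (g 1) := this
        _ ≤ 0 := max_le hgz hg1
    have h1 : F 1 ≤ F z := hanti ⟨le_refl z, hz1⟩ ⟨hz1, le_refl 1⟩ hz1
    exact le_trans (min_le_right _ _) h1
  · push_neg at hgz
    -- g ≥ 0 on [0,z], so F monotone there, F z ≥ F 0
    have hmono : MonotoneOn F (Set.Icc 0 z) := by
      apply monotoneOn_of_deriv_nonneg (convex_Icc 0 z) hFcont.continuousOn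
        hFdiff.differentiableOn
      intro x hx
      rw [interior_Icc] at hx
      rw [hderivF]
      by_contra hneg
      push_neg at hneg
      have hzseg : z ∈ segment ℝ x (1 : ℝ) := by
        rw [segment_eq_Icc (le_trans hx.2.le hz1)]
        exact ⟨hx.2.le, hz1⟩
      have := hgconv.le_on_segment (Set.mem_univ x) (Set.mem_univ 1) hzseg
      have : g z ≤ 0 := le_trans this (max_le hneg.le hg1)
      linarith
    have h0 : F 0 ≤ F z := hmono ⟨le_refl 0, hz0⟩ ⟨hz0, le_refl z⟩ hz0
    exact le_trans (min_le_left _ _) h0
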